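/- Let D be a division ring, φ a ring automorphism of D, and K = {a ∈ D : φ(a) = a}. Suppose the center k of K is contained in the center of D. If φ has finite order s, then the center of D((λ, φ)) is k((λˢ)), the set of Laurent series in λˢ with coefficients in k. -/

import Mathlib

/-- If `ψ` fixes `a`, so does any integer power of `ψ`. -/
lemma zpow_fix {D : Type*} [DivisionRing D] (ψ : D ≃+* D) (a : D) (h : ψ a = a) :
    ∀ i : ℤ, (ψ ^ i) a = a := by
  have hn : ∀ n : ℕ, (ψ ^ n) a = a := by
    intro n
    induction n with
    | zero => rfl
    | succ m ih =>
      rw [pow_succ]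
      show (ψ ^ m) (ψ a) = a
      rw [h, ih]
  intro i
  cases i with
  | ofNat n => simpa using hn n
  | negSucc n =>
    rw [zpow_negSucc]
    apply (ψ ^ (n + 1)).injective
    show (ψ ^ (n + 1)) (((ψ ^ (n + 1)) : D ≃+* D).symm a) = (ψ ^ (n + 1)) a
    rw [RingEquiv.apply_symm_apply, hn (n + 1)]

/-- Let `D` be a division ring, `φ` a ring automorphism of `D`, with the center `k` of the fixed
division subring `K = {a | φ a = a}` contained in the center of `D`.  The skew Laurent series
division ring `D((λ, φ))` is presented as a division ring `L` additively identified with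
`HahnSeries ℤ D` whose multiplication is the `φ`-twisted convolution.  If `φ` has finite order
`s`, then the center of `L` is `k((λ^s))`: a series is central iff all of its coefficients lie
in `k` and its support is contained in the multiples of `s`. -/
theorem center_skewLaurentSeries_of_finite_order
    (D : Type*) [DivisionRing D] (φ : D ≃+* D)
    (L : Type*) [DivisionRing L] (e : L ≃+ HahnSeries ℤ D)
    (hmul : ∀ x y : L, ∀ n : ℤ,
      (e (x * y)).coeff n = ∑ᶠ i : ℤ, (e x).coeff i * (φ ^ i) ((e y).coeff (n - i)))
    (hone : e 1 = HahnSeries.C (1 : D))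
    (hkF : ∀ a : D, φ a = a → (∀ b : D, φ b = b → a * b = b * a) →
      a ∈ Subring.center D)
    (s : ℕ) (hs : 0 < s) (hord : orderOf φ = s) :
    ∀ x : L, x ∈ Subring.center L ↔
      ∀ n : ℤ, (φ ((e x).coeff n) = (e x).coeff n ∧
          (∀ b : D, φ b = b → (e x).coeff n * b = b * (e x).coeff n)) ∧
        ((e x).coeff n ≠ 0 → (s : ℤ) ∣ n) := by
  intro x
  constructor
  · intro hx
    -- key: ∀ m k b, x_k * φ^k b = b * φ^m (x_k)
    have key : ∀ (m k : ℤ) (b : D),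
        (e x).coeff k * (φ ^ k) b = b * (φ ^ m) ((e x).coeff k) := by
      intro m k b
      set y : L := e.symm (HahnSeries.single m b) with hy
      have hey : e y = HahnSeries.single m b := e.apply_symm_apply _
      have hcomm : x * y = y * x := (Subring.mem_center_iff.mp hx y).symm
      have h1 := hmul x y (k + m)
      have h2 := hmul y x (k + m)
      rw [hcomm] at h1
      rw [h1] at h2
      have e1 : (∑ᶠ i : ℤ, (e x).coeff i * (φ ^ i) ((e y).coeff (k + m - i)))
          = (e x).coeff k * (φ ^ k) b := by
        rw [finsum_eq_single _ k]
        · rw [hey, show k + m - k = m by omega, HahnSeries.coeff_single_same]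
        · intro i hi
          rw [hey, HahnSeries.coeff_single_of_ne (show k + m - i ≠ m by omega),
            map_zero, mul_zero]
      have e2 : (∑ᶠ i : ℤ, (e y).coeff i * (φ ^ i) ((e x).coeff (k + m - i)))
          = b * (φ ^ m) ((e x).coeff k) := by
        rw [finsum_eq_single _ m]
        · rw [hey, HahnSeries.coeff_single_same, show k + m - m = k by omega]
        · intro i hi
          rw [hey, HahnSeries.coeff_single_of_ne hi, zero_mul]
      rw [e1, e2] at h2
      exact h2
    intro n
    have hfix : φ ((e x).coeff n) = (e x).coeff n := by
      have := key 1 n 1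
      simpa using this.symm
    have hcom : ∀ b : D, φ b = b → (e x).coeff n * b = b * (e x).coeff n := by
      intro b hb
      have := key 0 n b
      rw [zpow_fix φ b hb n] at this
      simpa using this
    refine ⟨⟨hfix, hcom⟩, ?_⟩
    intro hne
    have hcen : (e x).coeff n ∈ Subring.center D := hkF _ hfix hcom
    have hφn : ∀ b : D, (φ ^ n) b = b := by
      intro b
      have h0 := key 0 n b
      have h1 : (φ ^ (0 : ℤ)) ((e x).coeff n) = (e x).coeff n := rfl
      rw [h1] at h0
      have h0' : (e x).coeff n * (φ ^ n) b = (e x).coeff n * b := by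
        rw [h0]
        exact (Subring.mem_center_iff.mp hcen b)
      exact mul_left_cancel₀ hne h0'
    have hφn1 : φ ^ n = 1 := by
      ext b
      exact hφn b
    rw [← hord]
    exact orderOf_dvd_iff_zpow_eq_one.mpr hφn1
  · intro h
    rw [Subring.mem_center_iff]
    intro y
    apply e.injective
    ext n
    rw [hmul, hmul]
    have lhs : (∑ᶠ i : ℤ, (e y).coeff i * (φ ^ i) ((e x).coeff (n - i)))
        = ∑ᶠ i : ℤ, (e y).coeff i * (e x).coeff (n - i) := by
      apply finsum_congr
      intro i
      rw [zpow_fix φ _ ((h (n - i)).1.1) i]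
    have rhs : (∑ᶠ i : ℤ, (e x).coeff i * (φ ^ i) ((e y).coeff (n - i)))
        = ∑ᶠ i : ℤ, (e y).coeff (n - i) * (e x).coeff i := by
      apply finsum_congr
      intro i
      by_cases hxi : (e x).coeff i = 0
      · rw [hxi, zero_mul, mul_zero]
      · have hdvd := (h i).2 hxi
        have hφi : φ ^ i = 1 := by
          rw [← hord] at hdvd
          exact orderOf_dvd_iff_zpow_eq_one.mp hdvd
        rw [hφi]
        show (e x).coeff i * (e y).coeff (n - i) = _
        have hcen : (e x).coeff i ∈ Subring.center D :=
          hkF _ ((h i).1.1) ((h i).1.2)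
        exact (Subring.mem_center_iff.mp hcen _).symm
    rw [lhs, rhs]
    calc ∑ᶠ i : ℤ, (e y).coeff i * (e x).coeff (n - i)
        = ∑ᶠ i : ℤ, (e y).coeff (n - (n - i)) * (e x).coeff (n - i) := by
          apply finsum_congr
          intro i
          rw [show n - (n - i) = i from by omega]
      _ = ∑ᶠ i : ℤ, (e y).coeff (n - i) * (e x).coeff i :=
          finsum_comp_equiv (Equiv.subLeft n)
            (f := fun j => (e y).coeff (n - j) * (e x).coeff j)
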